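/- arXiv:1302.5506 — 2 statements merged into one kernel-verified Lean document; each statement's English description precedes it below -/
import Mathlib

section
/- Let n ≥ 1, let m, r be natural numbers with m < r, and let U be an open subset of ℝⁿ. Then every morphism of sheaves u : C^m → C^r over U is zero: for every open V ⊆ U, every φ ∈ C^m(V) and every x ∈ V, u_V(φ)(x) = 0. -/
open Metric Set Filter Topology
noncomputable section StmtAux
namespace StmtAux

def B : ContDiffBump (0:ℝ) := ⟨1, 2, one_pos, one_lt_two⟩
def ψ : ℝ → ℝ := fun t => B t
lemma ψ_contDiff : ContDiff ℝ ((⊤ : ℕ∞) : WithTop ℕ∞) ψ := B.contDiff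
lemma ψ_contDiff_nat {j : ℕ} : ContDiff ℝ (j : WithTop ℕ∞) ψ :=
  ψ_contDiff.of_le (by exact_mod_cast le_top)
lemma ψ_one {t : ℝ} (ht : |t| ≤ 1) : ψ t = 1 :=
  B.one_of_mem_closedBall (by simpa [Real.dist_eq] using (show |t| ≤ B.rIn from ht))
lemma ψ_zero {t : ℝ} (ht : 2 ≤ |t|) : ψ t = 0 :=
  B.zero_of_le_dist (by simpa [Real.dist_eq] using (show B.rOut ≤ |t| from ht))
lemma ψ_bound (j : ℕ) : ∃ K : ℝ, 0 ≤ K ∧ ∀ x, ‖iteratedFDeriv ℝ j ψ x‖ ≤ K := by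
  have hcs : HasCompactSupport ψ := B.hasCompactSupport
  have h1 : Continuous fun x => ‖iteratedFDeriv ℝ j ψ x‖ :=
    (ψ_contDiff_nat.continuous_iteratedFDeriv (le_refl _)).norm
  have h2 : HasCompactSupport fun x => ‖iteratedFDeriv ℝ j ψ x‖ :=
    (hcs.iteratedFDeriv j).norm
  obtain ⟨x0, hx0⟩ := h1.exists_forall_ge_of_hasCompactSupport h2
  exact ⟨_, norm_nonneg _, hx0⟩

def Kψ (j : ℕ) : ℝ := (ψ_bound j).choose
lemma Kψ_nonneg (j : ℕ) : 0 ≤ Kψ j := (ψ_bound j).choose_spec.1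
lemma Kψ_spec (j : ℕ) (x : ℝ) : ‖iteratedFDeriv ℝ j ψ x‖ ≤ Kψ j :=
  (ψ_bound j).choose_spec.2 x

def tk (k : ℕ) : ℝ := (4:ℝ)⁻¹ ^ (k+1)
def lk (k : ℕ) : ℝ := tk k / 8
def ηk (m k : ℕ) : ℝ := tk k ^ m * (2:ℝ)⁻¹ ^ (k+1)

lemma tk_pos (k : ℕ) : 0 < tk k := by simp only [tk]; positivity
lemma lk_pos (k : ℕ) : 0 < lk k := by
  simp only [lk]; exact div_pos (tk_pos k) (by norm_num)
lemma ηk_pos (m k : ℕ) : 0 < ηk m k := by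
  have := tk_pos k; simp only [ηk]; positivity
lemma tk_le_one (k : ℕ) : tk k ≤ 1 :=
  pow_le_one₀ (by norm_num) (by norm_num)
lemma tk_anti {j k : ℕ} (h : j < k) : 4 * tk k ≤ tk j := by
  have h1 : tk k ≤ (4:ℝ)⁻¹ ^ (j+2) := by
    apply pow_le_pow_of_le_one (by norm_num) (by norm_num); omega
  have h2 : (4:ℝ)⁻¹ ^ (j+2) = 4⁻¹ * tk j := by rw [tk, pow_succ]; ring
  rw [h2] at h1; linarith

def term (m k : ℕ) : ℝ → ℝ := fun s => ηk m k * ψ ((lk k)⁻¹ * (s - tk k))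
def Efun (m : ℕ) : ℝ → ℝ := fun s => ∑' k, term m k s

lemma term_contDiff (m k : ℕ) {N : ℕ∞} : ContDiff ℝ (N : WithTop ℕ∞) (term m k) := by
  apply ContDiff.mul contDiff_const
  exact B.contDiff.comp (contDiff_const.mul (contDiff_id.sub contDiff_const))

lemma term_fderiv_bound (m j k : ℕ) (x : ℝ) :
    ‖iteratedFDeriv ℝ j (term m k) x‖ ≤ ηk m k * ((lk k)⁻¹) ^ j * Kψ j := by
  set c := (lk k)⁻¹ with hc
  have hcpos : 0 < c := by rw [hc]; exact inv_pos.mpr (lk_pos k)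
  set b := -(c * tk k) with hb
  have hψ1 : ContDiff ℝ (j : WithTop ℕ∞) (fun z : ℝ => ψ (z + b)) :=
    ψ_contDiff_nat.comp (contDiff_id.add contDiff_const)
  have hF : ContDiff ℝ (j : WithTop ℕ∞) (fun s : ℝ => ψ (c * s + b)) :=
    hψ1.comp (contDiff_const.mul contDiff_id)
  have h1 : term m k = (ηk m k) • fun s : ℝ => ψ (c * s + b) := by
    funext s; simp only [term, Pi.smul_apply, smul_eq_mul]
    congr 1; rw [hb, hc]; ring
  rw [h1, iteratedFDeriv_const_smul_apply hF.contDiffAt]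
  have hns := norm_smul (ηk m k) (iteratedFDeriv ℝ j (fun s : ℝ => ψ (c * s + b)) x)
  rw [hns]
  have h2 : ‖iteratedFDeriv ℝ j (fun s : ℝ => ψ (c * s + b)) x‖
      = ‖c ^ j * iteratedDeriv j (fun z : ℝ => ψ (z + b)) (c * x)‖ := by
    rw [norm_iteratedFDeriv_eq_norm_iteratedDeriv]
    congr 1
    have := iteratedDeriv_comp_const_mul (f := fun z : ℝ => ψ (z + b)) (n := j) hψ1 c
    exact congrFun this x
  rw [h2]
  have h3 : iteratedDeriv j (fun z : ℝ => ψ (z + b)) (c * x)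
      = iteratedDeriv j ψ (c * x + b) := congrFun (iteratedDeriv_comp_add_const j ψ b) (c * x)
  rw [h3]
  have h4 : ‖iteratedDeriv j ψ (c * x + b)‖ ≤ Kψ j := by
    rw [← norm_iteratedFDeriv_eq_norm_iteratedDeriv]; exact Kψ_spec j _
  have h5 : ‖ηk m k‖ = ηk m k := abs_of_pos (ηk_pos m k)
  rw [h5, norm_mul, mul_assoc]
  have h6 : ‖c ^ j‖ = c ^ j := abs_of_pos (pow_pos hcpos j)
  rw [h6]
  have := (ηk_pos m k).le
  gcongr

lemma bound_le (m j k : ℕ) (hj : j ≤ m) :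
    ηk m k * ((lk k)⁻¹) ^ j * Kψ j ≤ Kψ j * 8 ^ j * (2:ℝ)⁻¹ ^ (k+1) := by
  set q : ℝ := (4:ℝ) ^ (k+1) with hq
  have hq1 : (1:ℝ) ≤ q := one_le_pow₀ (by norm_num)
  have htk : tk k = q⁻¹ := by rw [tk, hq, ← inv_pow]
  have hlk : (lk k)⁻¹ = 8 * q := by
    rw [lk, htk, div_eq_mul_inv, mul_inv, inv_inv]; ring
  rw [ηk, hlk, htk, mul_pow]
  have key : (q⁻¹) ^ m * q ^ j ≤ 1 := by
    rw [inv_pow, inv_mul_le_iff₀ (by positivity), mul_one]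
    exact pow_le_pow_right₀ hq1 hj
  have hK := Kψ_nonneg j
  calc q⁻¹ ^ m * (2:ℝ)⁻¹ ^ (k+1) * ((8:ℝ) ^ j * q ^ j) * Kψ j
      = (q⁻¹ ^ m * q ^ j) * (Kψ j * 8 ^ j * (2:ℝ)⁻¹ ^ (k+1)) := by ring
    _ ≤ 1 * (Kψ j * 8 ^ j * (2:ℝ)⁻¹ ^ (k+1)) := by
        apply mul_le_mul_of_nonneg_right key; positivity
    _ = Kψ j * 8 ^ j * (2:ℝ)⁻¹ ^ (k+1) := one_mul _

lemma Efun_contDiff (m : ℕ) : ContDiff ℝ ((m:ℕ∞) : WithTop ℕ∞) (Efun m) := by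
  apply contDiff_tsum (v := fun j k => Kψ j * 8 ^ j * (2:ℝ)⁻¹ ^ (k+1))
  · intro k; exact term_contDiff m k
  · intro j _
    apply Summable.mul_left
    have : Summable fun k : ℕ => ((2:ℝ)⁻¹) ^ k :=
      summable_geometric_of_lt_one (by norm_num) (by norm_num)
    simpa [pow_succ] using this.mul_right (2:ℝ)⁻¹
  · intro j k x hj
    refine (term_fderiv_bound m j k x).trans (bound_le m j k ?_)
    exact_mod_cast hj

lemma Efun_plateau (m k : ℕ) {s : ℝ} (hs : |s - tk k| ≤ lk k) : Efun m s = ηk m k := by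
  have hzero : ∀ j, j ≠ k → term m j s = 0 := by
    intro j hj
    have hlj := lk_pos j
    have htj := tk_pos j
    have htk := tk_pos k
    have hlk := lk_pos k
    obtain ⟨hs1, hs2⟩ := abs_le.mp hs
    have habs : 2 ≤ |(lk j)⁻¹ * (s - tk j)| := by
      rw [abs_mul, abs_of_pos (inv_pos.mpr hlj), le_inv_mul_iff₀ hlj]
      rcases lt_or_gt_of_ne hj with hlt | hgt
      · have h4 := tk_anti hlt
        refine le_abs.mpr (Or.inr ?_)
        simp only [lk] at *
        linarith
      · have h4 := tk_anti hgt
        refine le_abs.mpr (Or.inl ?_)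
        simp only [lk] at *
        linarith
    simp only [term]
    rw [ψ_zero habs, mul_zero]
  rw [Efun, tsum_eq_single k hzero]
  have harg : |(lk k)⁻¹ * (s - tk k)| ≤ 1 := by
    rw [abs_mul, abs_of_pos (inv_pos.mpr (lk_pos k))]
    rw [inv_mul_le_iff₀ (lk_pos k), mul_one]; exact hs
  simp only [term]
  rw [ψ_one harg, mul_one]

lemma itderivWithin_open {f : ℝ → ℝ} {s : Set ℝ} (hs : IsOpen s) {x : ℝ} (hx : x ∈ s) (j : ℕ) :
    iteratedDerivWithin j f s x = iteratedDeriv j f x := by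
  rw [iteratedDerivWithin_eq_iteratedFDerivWithin, iteratedDeriv_eq_iteratedFDeriv,
    iteratedFDerivWithin_of_isOpen j hs hx]

lemma tk_le_quarter (k : ℕ) : tk k ≤ 4⁻¹ := by
  have : tk k ≤ (4:ℝ)⁻¹ ^ 1 := pow_le_pow_of_le_one (by norm_num) (by norm_num) (by omega)
  simpa using this

lemma tk_mono (k : ℕ) : tk k ≤ tk 0 :=
  pow_le_pow_of_le_one (by norm_num) (by norm_num) (by omega)

lemma ηk_tendsto (m : ℕ) : Tendsto (fun k => ηk m k) atTop (𝓝 0) := by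
  have hb : Tendsto (fun k : ℕ => ((2:ℝ)⁻¹) ^ (k+1)) atTop (𝓝 0) := by
    have h0 : Tendsto (fun k : ℕ => ((2:ℝ)⁻¹) ^ k) atTop (𝓝 0) :=
      tendsto_pow_atTop_nhds_zero_of_lt_one (by norm_num) (by norm_num)
    exact h0.comp (tendsto_add_atTop_nat 1)
  apply squeeze_zero (fun k => (ηk_pos m k).le) (fun k => ?_) hb
  have h1 : tk k ^ m ≤ 1 := pow_le_one₀ (tk_pos k).le (tk_le_one k)
  have h2 : (0:ℝ) < (2:ℝ)⁻¹ ^ (k+1) := by positivity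
  calc ηk m k = tk k ^ m * (2:ℝ)⁻¹ ^ (k+1) := rfl
    _ ≤ 1 * (2:ℝ)⁻¹ ^ (k+1) := by gcongr
    _ = (2:ℝ)⁻¹ ^ (k+1) := one_mul _

lemma tk_tendsto : Tendsto tk atTop (𝓝 0) := by
  have h0 : Tendsto (fun k : ℕ => ((4:ℝ)⁻¹) ^ k) atTop (𝓝 0) :=
    tendsto_pow_atTop_nhds_zero_of_lt_one (by norm_num) (by norm_num)
  exact h0.comp (tendsto_add_atTop_nat 1)

end StmtAux

open scoped BigOperators

/-- The partial derivative in the `i`-th coordinate direction. -/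
noncomputable def pderivE (n : ℕ) (i : Fin n) (f : EuclideanSpace ℝ (Fin n) → ℝ) :
    EuclideanSpace ℝ (Fin n) → ℝ :=
  fun x => fderiv ℝ f x (EuclideanSpace.single i 1)

/-- The iterated partial derivative `∂^α` for a multi-index `α : Fin n → ℕ`. -/
noncomputable def partialD (n : ℕ) (α : Fin n → ℕ) (f : EuclideanSpace ℝ (Fin n) → ℝ) :
    EuclideanSpace ℝ (Fin n) → ℝ :=
  (List.finRange n).foldr (fun i g => (pderivE n i)^[α i] g) f

/-- The finset of multi-indices `α : Fin n → ℕ` of length `|α| = ∑ i, α i ≤ k`. -/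
def multiIdx (n k : ℕ) : Finset (Fin n → ℕ) :=
  (Finset.Iic fun _ : Fin n => k).filter fun α => (∑ i, α i) ≤ k

/-- A morphism of sheaves `C^m → C^r` over the open set `U ⊆ ℝⁿ`:  a family of
`ℝ`-linear maps `C^m(V) → C^r(V)`, for open `V ⊆ U`, commuting with restriction.
Sections of `C^k` over `V` are represented by total functions that are `C^k` on `V`;
`restrict` encodes both compatibility with restriction and the fact that `app V f`
only depends on `f|_V`. -/
structure SheafHom (n m r : ℕ) (U : Set (EuclideanSpace ℝ (Fin n))) where
  app : Set (EuclideanSpace ℝ (Fin n)) → (EuclideanSpace ℝ (Fin n) → ℝ) →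
    (EuclideanSpace ℝ (Fin n) → ℝ)
  map_contDiffOn : ∀ V, V ⊆ U → IsOpen V → ∀ f, ContDiffOn ℝ (m : ℕ∞) f V →
    ContDiffOn ℝ (r : ℕ∞) (app V f) V
  map_add : ∀ V, V ⊆ U → IsOpen V → ∀ f g, ContDiffOn ℝ (m : ℕ∞) f V →
    ContDiffOn ℝ (m : ℕ∞) g V → ∀ x ∈ V, app V (f + g) x = app V f x + app V g x
  map_smul : ∀ V, V ⊆ U → IsOpen V → ∀ (c : ℝ) f, ContDiffOn ℝ (m : ℕ∞) f V →
    ∀ x ∈ V, app V (c • f) x = c * app V f x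
  restrict : ∀ V, V ⊆ U → IsOpen V → ∀ W, W ⊆ V → IsOpen W →
    ∀ f g, ContDiffOn ℝ (m : ℕ∞) f V → ContDiffOn ℝ (m : ℕ∞) g W →
    (∀ x ∈ W, f x = g x) → ∀ x ∈ W, app V f x = app W g x

set_option maxHeartbeats 1000000 in
/-- If `m < r`, every morphism of sheaves `u : C^m → C^r` over an open `U ⊆ ℝⁿ` is zero. -/
theorem stmt_1 (n m r : ℕ) (hn : 1 ≤ n) (hmr : m < r)
    (U : Set (EuclideanSpace ℝ (Fin n))) (hU : IsOpen U)
    (u : SheafHom n m r U) :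
    ∀ V, V ⊆ U → IsOpen V → ∀ φ, ContDiffOn ℝ (m : ℕ∞) φ V → ∀ x ∈ V,
      u.app V φ x = 0 := by
  intro V hVU hV φ hφ x₀ hx₀
  by_contra hne
  classical
  set c : EuclideanSpace ℝ (Fin n) → ℝ := u.app V φ with hcdef
  have hcC : ContDiffOn ℝ (r : ℕ∞) c V := u.map_contDiffOn V hVU hV φ hφ
  obtain ⟨R, hR0, hball⟩ : ∃ R > 0, ball x₀ R ⊆ V := by
    rcases Metric.isOpen_iff.mp hV x₀ hx₀ with ⟨ε, hε, hsub⟩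
    exact ⟨ε, hε, hsub⟩
  set i₀ : Fin n := ⟨0, hn⟩ with hi₀
  set e₁ : EuclideanSpace ℝ (Fin n) := EuclideanSpace.single i₀ (1:ℝ) with he₁def
  have he₁ : ‖e₁‖ = 1 := by rw [he₁def, EuclideanSpace.norm_single]; norm_num
  have hcoord : ∀ z : EuclideanSpace ℝ (Fin n), |z i₀| ≤ ‖z‖ := by
    intro z
    have h1 : (inner ℝ e₁ z : ℝ) = z i₀ := by
      rw [he₁def, EuclideanSpace.inner_single_left]; simp
    have h2 := abs_real_inner_le_norm e₁ z
    rw [h1, he₁, one_mul] at h2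
    exact h2
  -- the cutoff function
  set σ : EuclideanSpace ℝ (Fin n) → ℝ := fun x => (x i₀ - x₀ i₀) / R with hσdef
  have hσC : ContDiff ℝ ((m : ℕ∞) : WithTop ℕ∞) σ := by
    have h1 : ContDiff ℝ ((m : ℕ∞) : WithTop ℕ∞)
        fun x : EuclideanSpace ℝ (Fin n) => ((EuclideanSpace.proj (𝕜 := ℝ) i₀) x - x₀ i₀) / R :=
      (((EuclideanSpace.proj (𝕜 := ℝ) i₀).contDiff).sub contDiff_const).div_const _
    simpa [hσdef, PiLp.proj_apply] using h1
  set g : EuclideanSpace ℝ (Fin n) → ℝ := fun x => StmtAux.Efun m (σ x) * φ x with hgdef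
  have hgC : ContDiffOn ℝ (m : ℕ∞) g V := by
    exact (((StmtAux.Efun_contDiff m).comp hσC).contDiffOn).mul hφ
  set τ : ℕ → ℝ := fun k => R * StmtAux.tk k with hτdef
  have hτpos : ∀ k, 0 < τ k := fun k => mul_pos hR0 (StmtAux.tk_pos k)
  set xk : ℕ → EuclideanSpace ℝ (Fin n) := fun k => x₀ + (τ k) • e₁ with hxkdef
  set W : ℕ → Set (EuclideanSpace ℝ (Fin n)) := fun k => ball (xk k) (R * StmtAux.lk k)
    with hWdef
  have hxknorm : ∀ k, ‖xk k - x₀‖ = τ k := by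
    intro k
    rw [hxkdef]
    simp only [add_sub_cancel_left, norm_smul, he₁, mul_one, Real.norm_eq_abs]
    exact abs_of_pos (hτpos k)
  have hWball : ∀ k, W k ⊆ ball x₀ R := by
    intro k x hx
    rw [hWdef, mem_ball, dist_eq_norm] at hx
    rw [mem_ball, dist_eq_norm]
    have h1 : ‖x - x₀‖ ≤ ‖x - xk k‖ + ‖xk k - x₀‖ := norm_sub_le_norm_sub_add_norm_sub _ _ _
    have h2 := hxknorm k
    have h3 := StmtAux.tk_le_quarter k
    have h4 : StmtAux.lk k = StmtAux.tk k / 8 := rfl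
    have h5 := (StmtAux.tk_pos k).le
    have h6 : τ k = R * StmtAux.tk k := rfl
    nlinarith [hx, h1]
  have hWV : ∀ k, W k ⊆ V := fun k => (hWball k).trans hball
  have hxki : ∀ k, (xk k) i₀ = x₀ i₀ + τ k := by
    intro k
    rw [hxkdef]
    simp [he₁def, EuclideanSpace.single_apply]
  have hσW : ∀ k, ∀ x ∈ W k, |σ x - StmtAux.tk k| ≤ StmtAux.lk k := by
    intro k x hx
    have h1 : |(x - xk k) i₀| ≤ ‖x - xk k‖ := hcoord _
    have h2 : ‖x - xk k‖ < R * StmtAux.lk k := by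
      rw [hWdef, mem_ball, dist_eq_norm] at hx; exact hx
    have h3 : (x - xk k) i₀ = x i₀ - (x₀ i₀ + τ k) := by
      have : (x - xk k) i₀ = x i₀ - (xk k) i₀ := rfl
      rw [this, hxki k]
    have h4 : σ x - StmtAux.tk k = ((x - xk k) i₀) / R := by
      rw [h3, hσdef]
      have h6 : τ k = R * StmtAux.tk k := rfl
      field_simp
      ring
    rw [h4, abs_div, abs_of_pos hR0, div_le_iff₀ hR0]
    have := h1.trans h2.le
    linarith [this]
  have hgW : ∀ k, ∀ x ∈ W k, g x = StmtAux.ηk m k * φ x := by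
    intro k x hx
    rw [hgdef]
    dsimp only
    rw [StmtAux.Efun_plateau m k (hσW k x hx)]
  set H : EuclideanSpace ℝ (Fin n) → ℝ := u.app V g with hHdef
  have hHC : ContDiffOn ℝ (r : ℕ∞) H V := u.map_contDiffOn V hVU hV g hgC
  have hHW : ∀ k, ∀ x ∈ W k, H x = StmtAux.ηk m k * c x := by
    intro k x hx
    have hWU : W k ⊆ U := (hWV k).trans hVU
    have hφW : ContDiffOn ℝ (m:ℕ∞) φ (W k) := hφ.mono (hWV k)
    have hsm : ContDiffOn ℝ (m:ℕ∞) ((StmtAux.ηk m k) • φ) (W k) := by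
      have h0 := hφW.const_smul (StmtAux.ηk m k)
      exact h0
    have h1 : u.app V g x = u.app (W k) ((StmtAux.ηk m k) • φ) x := by
      refine u.restrict V hVU hV (W k) (hWV k) isOpen_ball g ((StmtAux.ηk m k) • φ) hgC
        hsm ?_ x hx
      intro y hy
      rw [hgW k y hy, Pi.smul_apply, smul_eq_mul]
    have h2 : u.app (W k) ((StmtAux.ηk m k) • φ) x = StmtAux.ηk m k * u.app (W k) φ x :=
      u.map_smul (W k) hWU isOpen_ball _ φ hφW x hx
    have h3 : u.app V φ x = u.app (W k) φ x :=
      u.restrict V hVU hV (W k) (hWV k) isOpen_ball φ φ hφ hφW (fun _ _ => rfl) x hx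
    rw [hHdef, h1, h2, hcdef, h3]
  -- restriction to a line
  set L : ℝ → EuclideanSpace ℝ (Fin n) := fun t => x₀ + t • e₁ with hLdef
  have hLC : ContDiff ℝ (((m+1:ℕ):ℕ∞) : WithTop ℕ∞) L :=
    contDiff_const.add (contDiff_id.smul contDiff_const)
  have hLd : ∀ t, ‖L t - x₀‖ = |t| := by
    intro t
    rw [hLdef]
    simp [norm_smul, he₁]
  set I : Set ℝ := Ioo (-R) R with hIdef
  have hIopen : IsOpen I := isOpen_Ioo
  have hIU : UniqueDiffOn ℝ I := hIopen.uniqueDiffOn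
  have hLI : ∀ t ∈ I, L t ∈ ball x₀ R := by
    intro t ht
    rw [mem_ball, dist_eq_norm, hLd]
    rw [hIdef, mem_Ioo] at ht
    exact abs_lt.mpr ht
  set f1 : ℝ → ℝ := fun t => H (L t) with hf1def
  set d1 : ℝ → ℝ := fun t => c (L t) with hd1def
  have hrm : (((m+1:ℕ):ℕ∞) : WithTop ℕ∞) ≤ ((r:ℕ∞) : WithTop ℕ∞) := by
    exact_mod_cast hmr
  have hf1C : ContDiffOn ℝ ((m+1:ℕ):ℕ∞) f1 I :=
    ContDiffOn.comp (hHC.of_le hrm) hLC.contDiffOn (fun t ht => hball (hLI t ht))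
  have hd1C : ContDiffOn ℝ ((m+1:ℕ):ℕ∞) d1 I :=
    ContDiffOn.comp (hcC.of_le hrm) hLC.contDiffOn (fun t ht => hball (hLI t ht))
  set P : ℕ → Set ℝ := fun k => Ioo (τ k - R * StmtAux.lk k) (τ k + R * StmtAux.lk k)
    with hPdef
  have hPopen : ∀ k, IsOpen (P k) := fun k => isOpen_Ioo
  have hPI : ∀ k, P k ⊆ I := by
    intro k t ht
    rw [hPdef, mem_Ioo] at ht
    rw [hIdef, mem_Ioo]
    have h3 := StmtAux.tk_le_quarter k
    have h4 : StmtAux.lk k = StmtAux.tk k / 8 := rfl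
    have h5 := (StmtAux.tk_pos k).le
    have h6 : τ k = R * StmtAux.tk k := rfl
    constructor <;> nlinarith [ht.1, ht.2]
  have hτP : ∀ k, τ k ∈ P k := by
    intro k
    rw [hPdef, mem_Ioo]
    have := mul_pos hR0 (StmtAux.lk_pos k)
    constructor <;> linarith
  have hτI : ∀ k, τ k ∈ I := fun k => hPI k (hτP k)
  have hLP : ∀ k, ∀ t ∈ P k, L t ∈ W k := by
    intro k t ht
    rw [hWdef, mem_ball, dist_eq_norm]
    have h1 : L t - xk k = (t - τ k) • e₁ := by
      rw [hLdef, hxkdef]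
      module
    rw [h1, norm_smul, he₁, mul_one, Real.norm_eq_abs]
    rw [hPdef, mem_Ioo] at ht
    apply abs_lt.mpr
    constructor <;> linarith [ht.1, ht.2]
  have hEq : ∀ k, Set.EqOn f1 ((StmtAux.ηk m k) • d1) (P k) := by
    intro k t ht
    have h1 := hHW k (L t) (hLP k t ht)
    show f1 t = (StmtAux.ηk m k • d1) t
    rw [Pi.smul_apply, smul_eq_mul]
    exact h1
  have hDh : ∀ j : ℕ, j ≤ m+1 → ∀ k, ∀ t ∈ P k,
      iteratedDeriv j f1 t = StmtAux.ηk m k * iteratedDeriv j d1 t := by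
    intro j hj k t ht
    have hPU : UniqueDiffOn ℝ (P k) := (hPopen k).uniqueDiffOn
    have hd1P : ContDiffOn ℝ (j:ℕ∞) d1 (P k) :=
      (hd1C.of_le (by exact_mod_cast hj)).mono (hPI k)
    calc iteratedDeriv j f1 t = iteratedDerivWithin j f1 (P k) t :=
          (StmtAux.itderivWithin_open (hPopen k) ht j).symm
      _ = iteratedDerivWithin j ((StmtAux.ηk m k) • d1) (P k) t :=
          iteratedDerivWithin_congr (hEq k) ht
      _ = StmtAux.ηk m k • iteratedDerivWithin j d1 (P k) t :=
          iteratedDerivWithin_const_smul ht hPU _ (hd1P t ht)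
      _ = StmtAux.ηk m k * iteratedDeriv j d1 t := by
          rw [StmtAux.itderivWithin_open (hPopen k) ht j, smul_eq_mul]
  have hcont : ∀ (F : ℝ → ℝ), ContDiffOn ℝ ((m+1:ℕ):ℕ∞) F I → ∀ j : ℕ, j ≤ m+1 →
      ContinuousOn (iteratedDeriv j F) I := by
    intro F hF j hj
    have h1 : ContinuousOn (iteratedDerivWithin j F I) I :=
      hF.continuousOn_iteratedDerivWithin (by exact_mod_cast hj) hIU
    exact h1.congr fun t ht => (StmtAux.itderivWithin_open hIopen ht j).symm
  have hτ0 : Tendsto τ atTop (𝓝 0) := by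
    have h0 := StmtAux.tk_tendsto.const_mul R
    simpa [hτdef] using h0
  have h0I : (0:ℝ) ∈ I := by
    rw [hIdef, mem_Ioo]; constructor <;> linarith
  have hτ0I : Tendsto τ atTop (𝓝[I] 0) :=
    tendsto_nhdsWithin_iff.mpr ⟨hτ0, Eventually.of_forall hτI⟩
  have hdlim : ∀ j : ℕ, j ≤ m+1 →
      Tendsto (fun k => iteratedDeriv j d1 (τ k)) atTop (𝓝 (iteratedDeriv j d1 0)) := by
    intro j hj
    exact ((hcont d1 hd1C j hj 0 h0I).tendsto).comp hτ0I
  have hA : ∀ j : ℕ, j ≤ m → iteratedDeriv j f1 0 = 0 := by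
    intro j hj
    have hj1 : j ≤ m+1 := by omega
    have l1 : Tendsto (fun k => iteratedDeriv j f1 (τ k)) atTop (𝓝 (iteratedDeriv j f1 0)) :=
      ((hcont f1 hf1C j hj1 0 h0I).tendsto).comp hτ0I
    have l2 : Tendsto (fun k => iteratedDeriv j f1 (τ k)) atTop (𝓝 0) := by
      have heq2 : (fun k => iteratedDeriv j f1 (τ k))
          = fun k => StmtAux.ηk m k * iteratedDeriv j d1 (τ k) :=
        funext fun k => hDh j hj1 k (τ k) (hτP k)
      rw [heq2]
      have h5 := (StmtAux.ηk_tendsto m).mul (hdlim j hj1)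
      simpa using h5
    exact tendsto_nhds_unique l1 l2
  -- Taylor-type bound via the mean value inequality
  set b : ℝ := τ 0 with hbdef
  have hbpos : 0 < b := hτpos 0
  have hbR : b < R := by
    have h6 : b = R * StmtAux.tk 0 := rfl
    have : StmtAux.tk 0 ≤ 4⁻¹ := StmtAux.tk_le_quarter 0
    nlinarith
  have hIcc : Icc (0:ℝ) b ⊆ I := by
    intro t ht
    rw [mem_Icc] at ht
    rw [hIdef, mem_Ioo]
    constructor <;> nlinarith [ht.1, ht.2]
  obtain ⟨M, hM⟩ := isCompact_Icc.exists_bound_of_continuousOn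
    ((hcont f1 hf1C (m+1) le_rfl).mono hIcc)
  have hM0 : 0 ≤ M := le_trans (norm_nonneg _) (hM 0 (left_mem_Icc.mpr hbpos.le))
  have hder : ∀ j : ℕ, j ≤ m → ∀ t ∈ Ico (0:ℝ) b,
      HasDerivWithinAt (iteratedDeriv j f1) (iteratedDeriv (j+1) f1 t) (Ici t) t := by
    intro j hj t ht
    have htI : t ∈ I := hIcc (Ico_subset_Icc_self ht)
    have h1 : DifferentiableOn ℝ (iteratedDerivWithin j f1 I) I :=
      hf1C.differentiableOn_iteratedDerivWithin (by exact_mod_cast Nat.lt_succ_of_le hj) hIU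
    have h2 : DifferentiableAt ℝ (iteratedDerivWithin j f1 I) t :=
      (h1 t htI).differentiableAt (hIopen.mem_nhds htI)
    have hev : iteratedDerivWithin j f1 I =ᶠ[𝓝 t] iteratedDeriv j f1 := by
      filter_upwards [hIopen.mem_nhds htI] with y hy
      exact StmtAux.itderivWithin_open hIopen hy j
    have h3 : DifferentiableAt ℝ (iteratedDeriv j f1) t := by
      exact (Filter.EventuallyEq.differentiableAt_iff hev).mp h2
    have h4 : HasDerivAt (iteratedDeriv j f1) (deriv (iteratedDeriv j f1) t) t :=
      h3.hasDerivAt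
    rw [← iteratedDeriv_succ] at h4
    exact h4.hasDerivWithinAt
  have hind : ∀ i : ℕ, i ≤ m+1 → ∀ t ∈ Icc (0:ℝ) b,
      ‖iteratedDeriv (m+1-i) f1 t‖ ≤ M * t ^ i := by
    intro i
    induction i with
    | zero =>
      intro _ t ht
      simpa using hM t ht
    | succ i ih =>
      intro hi t ht
      have hi' : i ≤ m := by omega
      have hkey : m+1-(i+1) = m-i := by omega
      have hkey2 : m+1-i = (m-i)+1 := by omega
      have ihh : ∀ x ∈ Ico (0:ℝ) b, ‖iteratedDeriv ((m-i)+1) f1 x‖ ≤ M * x ^ i := by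
        intro x hx
        rw [← hkey2]
        exact ih (by omega) x (Ico_subset_Icc_self hx)
      rw [hkey]
      have hcont0 : ContinuousOn (iteratedDeriv (m-i) f1) (Icc 0 b) :=
        ((hcont f1 hf1C (m-i) (by omega)).mono hIcc)
      have hzero : ‖iteratedDeriv (m-i) f1 0‖ ≤ M * (0:ℝ)^(i+1) := by
        rw [hA (m-i) (by omega)]
        simp
      have hB : ∀ x : ℝ, HasDerivAt (fun y : ℝ => M * y ^ (i+1)) (M * ((i+1) * x ^ i)) x := by
        intro x
        have h7 := (hasDerivAt_pow (i+1) x).const_mul M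
        simpa using h7
      have hbound : ∀ x ∈ Ico (0:ℝ) b,
          ‖iteratedDeriv ((m-i)+1) f1 x‖ ≤ M * ((i+1) * x ^ i) := by
        intro x hx
        refine (ihh x hx).trans ?_
        have hx0 : (0:ℝ) ≤ x := hx.1
        have hp : (0:ℝ) ≤ x ^ i := pow_nonneg hx0 i
        have hi0 : (0:ℝ) ≤ (i:ℝ) := Nat.cast_nonneg i
        nlinarith [mul_nonneg (mul_nonneg hM0 hp) hi0]
      exact image_norm_le_of_norm_deriv_right_le_deriv_boundary hcont0
        (fun x hx => hder (m-i) (by omega) x hx) hzero hB hbound ht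
  have hfin : ∀ t ∈ Icc (0:ℝ) b, ‖f1 t‖ ≤ M * t ^ (m+1) := by
    intro t ht
    have h8 := hind (m+1) le_rfl t ht
    simpa using h8
  have hτIcc : ∀ k, τ k ∈ Icc (0:ℝ) b := by
    intro k
    rw [mem_Icc]
    refine ⟨(hτpos k).le, ?_⟩
    have := StmtAux.tk_mono k
    have h6 : τ k = R * StmtAux.tk k := rfl
    have h7 : b = R * StmtAux.tk 0 := rfl
    rw [h6, h7]
    exact mul_le_mul_of_nonneg_left this hR0.le
  have hdbound : ∀ k, |d1 (τ k)| ≤ M * R^(m+1) * (2:ℝ)⁻¹^(k+1) := by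
    intro k
    have h1 := hfin (τ k) (hτIcc k)
    have h2 : f1 (τ k) = StmtAux.ηk m k * d1 (τ k) := by
      have h9 := hDh 0 (by omega) k (τ k) (hτP k)
      simpa using h9
    rw [h2] at h1
    have hτpow : M * (τ k) ^ (m+1)
        = (M * R^(m+1) * (2:ℝ)⁻¹^(k+1)) * StmtAux.ηk m k := by
      have h6 : τ k = R * StmtAux.tk k := rfl
      have htk4 : StmtAux.tk k = (4:ℝ)⁻¹^(k+1) := rfl
      have hη : StmtAux.ηk m k = StmtAux.tk k ^ m * (2:ℝ)⁻¹^(k+1) := rfl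
      have hq : (4:ℝ)⁻¹^(k+1) = ((2:ℝ)⁻¹^(k+1))^2 := by
        rw [← pow_mul, mul_comm (k+1) 2, pow_mul]
        norm_num
      rw [h6, hη, htk4, hq]
      ring
    rw [hτpow] at h1
    have hη := StmtAux.ηk_pos m k
    rw [Real.norm_eq_abs, abs_mul, abs_of_pos hη] at h1
    have h1' : StmtAux.ηk m k * |d1 (τ k)|
        ≤ StmtAux.ηk m k * (M * R^(m+1) * (2:ℝ)⁻¹^(k+1)) := by linarith
    exact le_of_mul_le_mul_left h1' hη
  have hd0lim : Tendsto (fun k => |d1 (τ k)|) atTop (𝓝 |d1 0|) := by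
    have h1 : ContinuousOn d1 I := hd1C.continuousOn
    exact (((h1 0 h0I).tendsto).comp hτ0I).abs
  have hβ : Tendsto (fun k : ℕ => M * R^(m+1) * (2:ℝ)⁻¹^(k+1)) atTop (𝓝 0) := by
    have h0 : Tendsto (fun k : ℕ => ((2:ℝ)⁻¹) ^ (k+1)) atTop (𝓝 0) :=
      (tendsto_pow_atTop_nhds_zero_of_lt_one (by norm_num) (by norm_num)).comp
        (tendsto_add_atTop_nat 1)
    have h1 := h0.const_mul (M * R^(m+1))
    simpa using h1
  have hle : |d1 0| ≤ 0 := le_of_tendsto_of_tendsto' hd0lim hβ hdbound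
  have hzero : d1 0 = 0 := abs_eq_zero.mp (le_antisymm hle (abs_nonneg _))
  have hL0 : L 0 = x₀ := by rw [hLdef]; simp
  apply hne
  have : c x₀ = 0 := by rw [← hL0]; exact hzero
  rw [hcdef] at this
  exact this
end StmtAux
end

section
/- Let n ≥ 1, let m be a natural number, let U be an open subset of ℝⁿ, and for each multi-index α with |α| ≤ m let a_α : U → ℝ be a continuous function. If Σ_{|α| ≤ m} a_α(x) · (∂^α φ)(x) = 0 for every φ ∈ C^m(U) and every x ∈ U, then a_α = 0 identically on U for every α with |α| ≤ m. (Injectivity of the natural morphism from differential operators to sheaf morphisms.) -/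
open scoped BigOperators

noncomputable def monoF (n : ℕ) (x : EuclideanSpace ℝ (Fin n)) (γ : Fin n → ℕ) :
    EuclideanSpace ℝ (Fin n) → ℝ :=
  fun y => ∏ i, (y i - x i) ^ (γ i)

lemma monoF_contDiff (n : ℕ) (x : EuclideanSpace ℝ (Fin n)) (γ : Fin n → ℕ) :
    ContDiff ℝ ⊤ (monoF n x γ) :=
  contDiff_prod (𝔸' := ℝ) fun i _ =>
    (((EuclideanSpace.proj (𝕜 := ℝ) (ι := Fin n) i).contDiff (n := ⊤)).sub contDiff_const).pow _

lemma monoF_hasFDerivAt (n : ℕ) (x : EuclideanSpace ℝ (Fin n)) (γ : Fin n → ℕ)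
    (y : EuclideanSpace ℝ (Fin n)) :
    HasFDerivAt (monoF n x γ)
      (∑ i, (∏ j ∈ Finset.univ.erase i, (y j - x j) ^ (γ j)) •
        (((γ i : ℝ) * (y i - x i) ^ (γ i - 1)) •
          (EuclideanSpace.proj i : EuclideanSpace ℝ (Fin n) →L[ℝ] ℝ))) y := by
  have h : ∀ i ∈ Finset.univ (α := Fin n),
      HasFDerivAt (fun z : EuclideanSpace ℝ (Fin n) => (z i - x i) ^ (γ i))
        (((γ i : ℝ) * (y i - x i) ^ (γ i - 1)) •
          (EuclideanSpace.proj i : EuclideanSpace ℝ (Fin n) →L[ℝ] ℝ)) y := by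
    intro i _
    have h1 : HasDerivAt (fun t : ℝ => (t - x i) ^ (γ i))
        ((γ i : ℝ) * (y i - x i) ^ (γ i - 1)) (y i) := by
      simpa using (((hasDerivAt_id (y i)).sub_const (x i)).fun_pow (γ i))
    have hcoe : ⇑(EuclideanSpace.proj (𝕜 := ℝ) i)
        = fun z : EuclideanSpace ℝ (Fin n) => z i := by exact rfl
    have h2 := ((EuclideanSpace.proj i : EuclideanSpace ℝ (Fin n) →L[ℝ] ℝ)).hasFDerivAt (x := y)
    rw [hcoe] at h2
    exact HasDerivAt.comp_hasFDerivAt (f := fun z : EuclideanSpace ℝ (Fin n) => z i) y h1 h2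
  exact HasFDerivAt.finset_prod h

lemma pderivE_monoF (n : ℕ) (x : EuclideanSpace ℝ (Fin n)) (γ : Fin n → ℕ) (i : Fin n) :
    pderivE n i (monoF n x γ) =
      fun y => (γ i : ℝ) * monoF n x (Function.update γ i (γ i - 1)) y := by
  funext y
  have h := (monoF_hasFDerivAt n x γ y).fderiv
  unfold pderivE
  rw [h]
  simp only [ContinuousLinearMap.coe_sum', Finset.sum_apply, ContinuousLinearMap.coe_smul',
    Pi.smul_apply]
  have hsingle : ∀ j : Fin n, (EuclideanSpace.proj j : EuclideanSpace ℝ (Fin n) →L[ℝ] ℝ)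
      (EuclideanSpace.single i 1) = if j = i then 1 else 0 := by
    intro j
    have : (EuclideanSpace.proj j : EuclideanSpace ℝ (Fin n) →L[ℝ] ℝ)
        (EuclideanSpace.single i 1) = (EuclideanSpace.single i (1:ℝ)) j := by exact rfl
    rw [this, EuclideanSpace.single_apply]
  rw [Finset.sum_eq_single i]
  · have hprod : monoF n x (Function.update γ i (γ i - 1)) y
        = (y i - x i) ^ (γ i - 1) * ∏ j ∈ Finset.univ.erase i, (y j - x j) ^ (γ j) := by
      unfold monoF
      rw [← Finset.mul_prod_erase Finset.univ _ (Finset.mem_univ i)]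
      rw [Function.update_self]
      congr 1
      refine Finset.prod_congr rfl fun j hj => ?_
      rw [Function.update_of_ne (Finset.ne_of_mem_erase hj)]
    rw [hprod, hsingle, if_pos rfl]
    simp only [smul_eq_mul, mul_one]
    ring
  · intro b _ hb
    simp [hsingle, hb]
  · simp

lemma pderivE_smul (n : ℕ) (i : Fin n) (c : ℝ) (f : EuclideanSpace ℝ (Fin n) → ℝ)
    (hf : Differentiable ℝ f) :
    pderivE n i (fun y => c * f y) = fun y => c * pderivE n i f y := by
  funext y
  unfold pderivE
  have h1 : (fun y => c * f y) = fun y => c • f y := by funext z; simp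
  rw [h1, fderiv_fun_const_smul (hf y) c]
  simp

lemma iter_pderivE_monoF (n : ℕ) (x : EuclideanSpace ℝ (Fin n)) (i : Fin n) (k : ℕ) :
    ∀ γ : Fin n → ℕ, (pderivE n i)^[k] (monoF n x γ) =
      fun y => ((γ i).descFactorial k : ℝ) * monoF n x (Function.update γ i (γ i - k)) y := by
  induction k with
  | zero =>
    intro γ
    funext y
    simp [Function.update_eq_self]
  | succ k ih =>
    intro γ
    rw [Function.iterate_succ_apply', ih γ]
    rw [pderivE_smul n i _ _ ((monoF_contDiff n x _).differentiable (by simp))]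
    rw [pderivE_monoF]
    funext y
    have h1 : Function.update γ i (γ i - k) i = γ i - k := Function.update_self _ _ _
    rw [h1]
    have h2 : Function.update (Function.update γ i (γ i - k)) i (γ i - k - 1)
        = Function.update γ i (γ i - (k + 1)) := by
      rw [Function.update_idem, Nat.sub_sub]
    rw [h2]
    have h3 : ((γ i).descFactorial (k+1) : ℝ)
        = ((γ i).descFactorial k : ℝ) * ((γ i - k : ℕ) : ℝ) := by
      rw [Nat.descFactorial_succ]
      push_cast
      ring
    rw [h3]
    ring

lemma iter_pderivE_mul (n : ℕ) (x : EuclideanSpace ℝ (Fin n)) (i : Fin n) (c : ℝ) (k : ℕ)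
    (γ : Fin n → ℕ) :
    (pderivE n i)^[k] (fun y => c * monoF n x γ y)
      = fun y => c * ((γ i).descFactorial k : ℝ)
          * monoF n x (Function.update γ i (γ i - k)) y := by
  have h := pderivE_smul n i c (monoF n x γ)
    ((monoF_contDiff n x γ).differentiable (by simp))
  calc (pderivE n i)^[k] (fun y => c * monoF n x γ y)
      = fun y => c * ((pderivE n i)^[k] (monoF n x γ)) y := by
        induction k with
        | zero => rfl
        | succ k ih =>
          rw [Function.iterate_succ_apply', Function.iterate_succ_apply', ih,
            iter_pderivE_monoF n x i k γ]
          have hdiff : Differentiable ℝ (monoF n x (Function.update γ i (γ i - k))) :=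
            (monoF_contDiff n x _).differentiable (by simp)
          rw [show (fun y => c * (((γ i).descFactorial k : ℝ) *
                monoF n x (Function.update γ i (γ i - k)) y))
              = fun y => (c * ((γ i).descFactorial k : ℝ)) *
                monoF n x (Function.update γ i (γ i - k)) y from by funext y; ring,
            pderivE_smul n i _ _ hdiff,
            pderivE_smul n i _ _ hdiff]
          funext y; ring
    _ = _ := by rw [iter_pderivE_monoF n x i k γ]; funext y; ring

lemma foldr_monoF (n : ℕ) (x : EuclideanSpace ℝ (Fin n)) (α : Fin n → ℕ) :
    ∀ (l : List (Fin n)), l.Nodup → ∀ γ : Fin n → ℕ,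
      List.foldr (fun i g => (pderivE n i)^[α i] g) (monoF n x γ) l
        = fun y => (∏ i ∈ l.toFinset, ((γ i).descFactorial (α i) : ℝ)) *
            monoF n x (fun i => if i ∈ l then γ i - α i else γ i) y := by
  intro l
  induction l with
  | nil =>
    intro _ γ
    simp only [List.foldr_nil, List.toFinset_nil, Finset.prod_empty, List.not_mem_nil,
      if_false, one_mul]
  | cons i l ih =>
    intro hnd γ
    obtain ⟨hi, hl⟩ := List.nodup_cons.mp hnd
    rw [List.foldr_cons, ih hl γ]
    set γ₁ : Fin n → ℕ := fun j => if j ∈ l then γ j - α j else γ j with hγ₁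
    rw [iter_pderivE_mul n x i _ (α i) γ₁]
    have hγ₁i : γ₁ i = γ i := by simp [hγ₁, hi]
    have hupd : Function.update γ₁ i (γ₁ i - α i)
        = fun j => if j ∈ i :: l then γ j - α j else γ j := by
      funext j
      rcases eq_or_ne j i with rfl | hj
      · simp [Function.update_self, hγ₁i, List.mem_cons]
      · simp [Function.update_of_ne hj, hγ₁, List.mem_cons, hj]
    have hprod : (∏ j ∈ (i :: l).toFinset, ((γ j).descFactorial (α j) : ℝ))
        = ((γ₁ i).descFactorial (α i) : ℝ) *
          ∏ j ∈ l.toFinset, ((γ j).descFactorial (α j) : ℝ) := by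
      rw [List.toFinset_cons, Finset.prod_insert (by simpa using hi), hγ₁i]
    rw [hupd, hprod]
    funext y; ring

lemma partialD_monoF (n : ℕ) (x : EuclideanSpace ℝ (Fin n)) (α γ : Fin n → ℕ) :
    partialD n α (monoF n x γ)
      = fun y => (∏ i, ((γ i).descFactorial (α i) : ℝ)) *
          monoF n x (fun i => γ i - α i) y := by
  unfold partialD
  rw [foldr_monoF n x α (List.finRange n) (List.nodup_finRange n) γ]
  simp [List.mem_finRange, List.toFinset_finRange]

lemma monoF_self (n : ℕ) (x : EuclideanSpace ℝ (Fin n)) (γ : Fin n → ℕ) :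
    monoF n x γ x = ∏ i, (if γ i = 0 then (1:ℝ) else 0) := by
  unfold monoF
  refine Finset.prod_congr rfl fun i _ => ?_
  rcases eq_or_ne (γ i) 0 with h | h
  · simp [h]
  · simp [h, zero_pow h]


/-- Injectivity of the natural morphism: if a differential operator of order `≤ m` with
continuous coefficients vanishes on all of `C^m(U)`, then all its coefficients vanish on `U`. -/
theorem stmt_4 (n m : ℕ) (hn : 1 ≤ n)
    (U : Set (EuclideanSpace ℝ (Fin n))) (hU : IsOpen U)
    (a : (Fin n → ℕ) → EuclideanSpace ℝ (Fin n) → ℝ)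
    (ha : ∀ α ∈ multiIdx n m, ContinuousOn (a α) U)
    (hP : ∀ φ : EuclideanSpace ℝ (Fin n) → ℝ, ContDiffOn ℝ (m : ℕ∞) φ U → ∀ x ∈ U,
      ∑ α ∈ multiIdx n m, a α x * partialD n α φ x = 0) :
    ∀ α ∈ multiIdx n m, ∀ x ∈ U, a α x = 0 := by
  intro β hβ x hx
  have hCD : ContDiffOn ℝ (m : ℕ∞) (monoF n x β) U :=
    ((monoF_contDiff n x β).of_le le_top).contDiffOn
  have hsum := hP (monoF n x β) hCD x hx
  have hside : ∀ α ∈ multiIdx n m, α ≠ β → a α x * partialD n α (monoF n x β) x = 0 := by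
    intro α _ hne
    obtain ⟨i, hi⟩ := Function.ne_iff.mp hne
    have hzero : partialD n α (monoF n x β) x = 0 := by
      simp only [partialD_monoF]
      rcases lt_or_lt_iff_ne.mpr hi with hlt | hlt
      · -- α i < β i : monomial factor vanishes
        rw [monoF_self]
        have : (∏ j, (if β j - α j = 0 then (1:ℝ) else 0)) = 0 :=
          Finset.prod_eq_zero (Finset.mem_univ i) (by simp [Nat.sub_eq_zero_iff_le]; omega)
        rw [this, mul_zero]
      · -- β i < α i : descFactorial vanishes
        have : (∏ j, ((β j).descFactorial (α j) : ℝ)) = 0 :=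
          Finset.prod_eq_zero (Finset.mem_univ i)
            (by rw [Nat.descFactorial_eq_zero_iff_lt.mpr hlt]; simp)
        rw [this, zero_mul]
    rw [hzero, mul_zero]
  rw [Finset.sum_eq_single_of_mem β hβ hside] at hsum
  have hval : partialD n β (monoF n x β) x = ∏ i, ((Nat.factorial (β i) : ℕ) : ℝ) := by
    simp only [partialD_monoF]
    have h1 : (fun i => β i - β i) = fun _ : Fin n => 0 := by funext i; omega
    rw [h1, monoF_self]
    simp [Nat.descFactorial_self]
  rw [hval] at hsum
  have hne : (∏ i, ((Nat.factorial (β i) : ℕ) : ℝ)) ≠ 0 :=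
    Finset.prod_ne_zero_iff.mpr fun i _ => Nat.cast_ne_zero.mpr (Nat.factorial_ne_zero _)
  exact (mul_eq_zero.mp hsum).resolve_right hne
end
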